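/- Let 𝒮 : ℝ^{m×m} → 𝕊^m and 𝒳 : ℝ^{m×m} → ℝ^{m×m} be defined by 𝒮(Y) = (Y + Yᵀ)/2 and 𝒳(Y) = (Y − Yᵀ)/2. If Σ ∈ ℝ^{m×m} has all entries strictly between 0 and 1, and Γ ∈ ℝ^{m×m} satisfies 𝒮(Γ) + Σ ∘ 𝒳(Γ) = 0 (where ∘ is the Hadamard product), then Γ = 0. -/
import Mathlib

/- STATEMENT 5: With 𝒮(Y) = (Y + Yᵀ)/2 and 𝒳(Y) = (Y − Yᵀ)/2, if every entry of
Sig ∈ ℝ^{m×m} lies strictly between 0 and 1 and Γ satisfies 𝒮(Γ) + Sig ∘ 𝒳(Γ) = 0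
(Hadamard product), then Γ = 0. -/
theorem stmt5 (m : ℕ) (Sig Γ : Matrix (Fin m) (Fin m) ℝ)
    (hSig : ∀ i j, 0 < Sig i j ∧ Sig i j < 1)
    (heq : ∀ i j, (Γ i j + Γ j i) / 2 + Sig i j * ((Γ i j - Γ j i) / 2) = 0) :
    Γ = 0 := by
  ext i j
  have h1 := heq i j
  have h2 := heq j i
  have hs := hSig i j
  have ht := hSig j i
  simp only [Matrix.zero_apply]
  nlinarith [sq_nonneg (Γ i j + Γ j i), sq_nonneg (Γ i j - Γ j i),
    mul_pos hs.1 ht.1, sq_nonneg (Γ i j)]
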